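/- For every surface S of genus g ≥ 0, and for every partition of an n-set into X and Y with |X| > 2|Y| − 4 + 4g, the 3-uniform hypergraph G with all edges of types XXX, XYY, and YYY contains no vertex-spanning subcomplex homeomorphic to S. Consequently, choosing |X| = ⌈2n/3⌉ + 4g yields δ₁(G) ≥ (5/9)·C(n,2) − o(n²). -/

import Mathlib

open Finset

/-- Tight connectivity between edges within an edge set `E` of a 3-graph. -/
def TightConnIn {V : Type*} [DecidableEq V] (E : Finset (Finset V)) (e f : Finset V) : Prop :=
  Relation.ReflTransGen (fun a b => a ∈ E ∧ b ∈ E ∧ (a ∩ b).card = 2) e f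

/-- The 3-graph on `X ∪ Y` with all edges of types XXX, XYY and YYY. -/
def surfEdges {V : Type*} [Fintype V] [DecidableEq V] (X Y : Finset V) :
    Finset (Finset V) :=
  (Finset.univ.powersetCard 3).filter (fun e =>
    e ⊆ X ∨ ((e ∩ X).card = 1 ∧ (e ∩ Y).card = 2) ∨ e ⊆ Y)

/-- An abstract (combinatorial) triangulation of a closed surface of genus `g`:
a tightly connected family of triangles in which every covered vertex lies in at
least 3 triangles, every 2-edge lies in exactly two triangles (`2e = 3f`), and
Euler's formula `f + v - e = 2 - 2g` holds. -/
def IsSurfaceTriangulation {V : Type*} [DecidableEq V] (g : ℕ)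
    (H : Finset (Finset V)) : Prop :=
  (∀ t ∈ H, t.card = 3) ∧
  (∀ e ∈ H, ∀ f ∈ H, TightConnIn H e f) ∧
  (∀ x : V, (∃ t ∈ H, x ∈ t) → 3 ≤ (H.filter (fun t => x ∈ t)).card) ∧
  2 * (H.biUnion (fun t => t.powersetCard 2)).card = 3 * H.card ∧
  (H.card : ℤ) + ((H.biUnion id).card : ℤ)
      - ((H.biUnion (fun t => t.powersetCard 2)).card : ℤ) = 2 - 2 * (g : ℤ)

set_option linter.unusedVariables false

theorem part1 (g : ℕ) (V : Type) [Fintype V] [DecidableEq V] (X Y : Finset V)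
    (hdisj : Disjoint X Y) (hunion : X ∪ Y = Finset.univ) (hXne : X.Nonempty)
    (hYne : Y.Nonempty) (hlt : 2 * (Y.card : ℤ) - 4 + 4 * (g : ℤ) < (X.card : ℤ))
    (H : Finset (Finset V)) (hHsub : H ⊆ surfEdges X Y)
    (hTri : IsSurfaceTriangulation g H) :
    ¬ (∀ v : V, ∃ t ∈ H, v ∈ t) := by
  intro hspan
  obtain ⟨hcard3, hconn, hdeg, heuler2, heuler⟩ := hTri
  -- characterize surfEdges membership
  have hmem : ∀ t ∈ H, t.card = 3 ∧
      (t ⊆ X ∨ ((t ∩ X).card = 1 ∧ (t ∩ Y).card = 2) ∨ t ⊆ Y) := by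
    intro t ht
    have := hHsub ht
    rw [surfEdges, mem_filter, mem_powersetCard] at this
    exact ⟨this.1.2, this.2⟩
  -- if t ⊆ X and tightly connected to s, then s ⊆ X
  have inv : ∀ a b : Finset V, TightConnIn H a b → a ⊆ X → b ⊆ X := by
    intro a b hab
    induction hab with
    | refl => exact id
    | tail _ hstep ih =>
      intro haX
      have hbX := ih haX
      obtain ⟨hbH, hcH, hcard⟩ := hstep
      rename_i b' c _
      have h2 : 2 ≤ (c ∩ X).card := by
        have hsub : b' ∩ c ⊆ c ∩ X :=
          subset_inter inter_subset_right (inter_subset_left.trans hbX)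
        calc 2 = (b' ∩ c).card := hcard.symm
          _ ≤ _ := card_le_card hsub
      rcases (hmem c hcH).2 with h | h | h
      · exact h
      · omega
      · exfalso
        have : c ∩ X = ∅ := by
          rw [← Finset.disjoint_iff_inter_eq_empty]
          exact hdisj.symm.mono_left h
        rw [this] at h2; simp at h2
  -- some triangle is not inside X
  obtain ⟨y, hy⟩ := hYne
  obtain ⟨t₀, ht₀H, hyt₀⟩ := hspan y
  have ht₀ : ¬ t₀ ⊆ X := fun hsub => (Finset.disjoint_left.mp hdisj (hsub hyt₀)) hy
  -- every triangle has at most one vertex in X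
  have atMostOne : ∀ t ∈ H, (t ∩ X).card ≤ 1 := by
    intro t ht
    have hnX : ¬ t ⊆ X := fun hX => ht₀ (inv t t₀ (hconn t ht t₀ ht₀H) hX)
    rcases (hmem t ht).2 with h | h | h
    · exact absurd h hnX
    · omega
    · have : t ∩ X = ∅ := by
        rw [← Finset.disjoint_iff_inter_eq_empty]
        exact hdisj.symm.mono_left h
      simp [this]
  -- H.card ≥ 3 * X.card
  have hF : 3 * X.card ≤ H.card := by
    have hdisjfam : (X : Set V).PairwiseDisjoint (fun x => H.filter (fun t => x ∈ t)) := by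
      intro x hx x' hx' hne
      simp only [Function.onFun]
      rw [Finset.disjoint_left]
      intro t ht ht'
      simp only [mem_filter] at ht ht'
      have : ({x, x'} : Finset V) ⊆ t ∩ X := by
        intro z hz
        simp only [mem_insert, mem_singleton] at hz
        rcases hz with rfl | rfl
        · exact mem_inter.mpr ⟨ht.2, hx⟩
        · exact mem_inter.mpr ⟨ht'.2, hx'⟩
      have := card_le_card this
      rw [Finset.card_pair hne] at this
      have := atMostOne t ht.1
      omega
    have h1 : X.biUnion (fun x => H.filter (fun t => x ∈ t)) ⊆ H :=
      biUnion_subset.mpr (fun x _ => filter_subset _ _)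
    have h2 := card_le_card h1
    rw [card_biUnion (fun x hx y hy hne => hdisjfam hx hy hne)] at h2
    have h3 : ∀ x ∈ X, 3 ≤ (H.filter (fun t => x ∈ t)).card := by
      intro x _
      exact hdeg x (hspan x)
    calc 3 * X.card = ∑ _x ∈ X, 3 := by rw [Finset.sum_const]; ring
      _ ≤ ∑ x ∈ X, (H.filter (fun t => x ∈ t)).card := Finset.sum_le_sum h3
      _ ≤ H.card := h2
  -- spanning: vertex count is |X| + |Y|
  have hV : (H.biUnion id).card = X.card + Y.card := by
    have : H.biUnion id = Finset.univ := by
      apply Finset.eq_univ_iff_forall.mpr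
      intro v
      obtain ⟨t, ht, hvt⟩ := hspan v
      exact mem_biUnion.mpr ⟨t, ht, hvt⟩
    rw [this, ← hunion, card_union_of_disjoint hdisj]
  -- arithmetic
  have hE : (2 : ℤ) * (H.biUnion (fun t => t.powersetCard 2)).card = 3 * H.card := by
    exact_mod_cast heuler2
  have hFz : (3 : ℤ) * X.card ≤ H.card := by exact_mod_cast hF
  have hVz : ((H.biUnion id).card : ℤ) = X.card + Y.card := by exact_mod_cast hV
  linarith [heuler]

section DegLB
variable {V : Type} [Fintype V] [DecidableEq V] (X Y : Finset V) (v : V)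

/-- generic lower bound via pairs -/
lemma deg_ge_pairs :
    ((((Finset.univ.erase v).powersetCard 2).filter
        (fun p => insert v p ∈ surfEdges X Y)).card) ≤
      (((surfEdges X Y).filter (fun e => v ∈ e)).card) := by
  apply Finset.card_le_card_of_injOn (fun p => insert v p)
  · intro p hp
    simp only [mem_coe, mem_filter, mem_powersetCard] at hp ⊢
    exact ⟨hp.2, mem_insert_self _ _⟩
  · intro p hp q hq hpq
    simp only [coe_filter, Set.mem_setOf_eq, mem_powersetCard] at hp hq
    have hvp : v ∉ p := fun h => (mem_erase.mp (hp.1.1 h)).1 rfl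
    have hvq : v ∉ q := fun h => (mem_erase.mp (hq.1.1 h)).1 rfl
    have := congrArg (fun s => Finset.erase s v) hpq
    simpa [Finset.erase_insert hvp, Finset.erase_insert hvq] using this

lemma degX (hdisj : Disjoint X Y) (hv : v ∈ X) :
    (X.erase v).card.choose 2 + Y.card.choose 2 ≤
      (((surfEdges X Y).filter (fun e => v ∈ e)).card) := by
  refine le_trans ?_ (deg_ge_pairs X Y v)
  have hvY : v ∉ Y := Finset.disjoint_left.mp hdisj hv
  have hsub : (X.erase v).powersetCard 2 ∪ Y.powersetCard 2 ⊆
      ((Finset.univ.erase v).powersetCard 2).filter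
        (fun p => insert v p ∈ surfEdges X Y) := by
    intro p hp
    rw [mem_union, mem_powersetCard, mem_powersetCard] at hp
    rw [mem_filter, mem_powersetCard]
    rcases hp with ⟨hpX, hp2⟩ | ⟨hpY, hp2⟩
    · have hvp : v ∉ p := fun h => (mem_erase.mp (hpX h)).1 rfl
      have hpe : p ⊆ Finset.univ.erase v := hpX.trans (erase_subset_erase _ (subset_univ X))
      refine ⟨⟨hpe, hp2⟩, ?_⟩
      rw [surfEdges, mem_filter, mem_powersetCard]
      refine ⟨⟨subset_univ _, by rw [card_insert_of_notMem hvp, hp2]⟩, Or.inl ?_⟩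
      exact insert_subset hv ((hpX.trans (erase_subset _ _)))
    · have hvp : v ∉ p := fun h => hvY (hpY h)
      have hpe : p ⊆ Finset.univ.erase v := fun z hz =>
        mem_erase.mpr ⟨fun h => hvp (h ▸ hz), mem_univ z⟩
      refine ⟨⟨hpe, hp2⟩, ?_⟩
      rw [surfEdges, mem_filter, mem_powersetCard]
      refine ⟨⟨subset_univ _, by rw [card_insert_of_notMem hvp, hp2]⟩, Or.inr (Or.inl ⟨?_, ?_⟩)⟩
      · have hpX : p ∩ X = ∅ := by
          rw [← Finset.disjoint_iff_inter_eq_empty]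
          exact hdisj.symm.mono_left hpY
        rw [Finset.insert_inter_of_mem hv, hpX]
        simp
      · rw [Finset.insert_inter_of_notMem hvY, Finset.inter_eq_left.mpr hpY, hp2]
  refine le_trans (le_of_eq ?_) (card_le_card hsub)
  rw [card_union_of_disjoint, card_powersetCard, card_powersetCard]
  rw [Finset.disjoint_left]
  intro p hp hp'
  rw [mem_powersetCard] at hp hp'
  obtain ⟨z, hz⟩ := Finset.card_pos.mp (by omega : 0 < p.card)
  exact Finset.disjoint_left.mp hdisj ((hp.1.trans (erase_subset _ _)) hz) (hp'.1 hz)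

lemma degY (hdisj : Disjoint X Y) (hunion : X ∪ Y = Finset.univ) (hv : v ∈ Y) :
    (Finset.univ.erase v : Finset V).card.choose 2 ≤
      X.card.choose 2 + (((surfEdges X Y).filter (fun e => v ∈ e)).card) := by
  have hvX : v ∉ X := fun h => Finset.disjoint_left.mp hdisj h hv
  set P := (Finset.univ.erase v : Finset V).powersetCard 2 with hP
  have key : P.filter (fun p => ¬ p ⊆ X) ⊆
      P.filter (fun p => insert v p ∈ surfEdges X Y) := by
    intro p hp
    rw [mem_filter] at hp ⊢
    obtain ⟨hpP, hnX⟩ := hp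
    rw [hP, mem_powersetCard] at hpP
    obtain ⟨hpe, hp2⟩ := hpP
    have hvp : v ∉ p := fun h => (mem_erase.mp (hpe h)).1 rfl
    refine ⟨by rw [hP, mem_powersetCard]; exact ⟨hpe, hp2⟩, ?_⟩
    rw [surfEdges, mem_filter, mem_powersetCard]
    refine ⟨⟨subset_univ _, by rw [card_insert_of_notMem hvp, hp2]⟩, ?_⟩
    have hsplit : (p ∩ X).card + (p ∩ Y).card = 2 := by
      have hdpXY : Disjoint (p ∩ X) (p ∩ Y) := hdisj.mono inter_subset_right inter_subset_right
      have hcup : (p ∩ X) ∪ (p ∩ Y) = p := by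
        rw [← Finset.inter_union_distrib_left, hunion, Finset.inter_univ]
      rw [← card_union_of_disjoint hdpXY, hcup, hp2]
    have hle : (p ∩ X).card ≤ 2 := le_trans (card_le_card inter_subset_left) (le_of_eq hp2)
    have hne2 : (p ∩ X).card ≠ 2 := by
      intro h2
      exact hnX (by
        have : p ∩ X = p := Finset.eq_of_subset_of_card_le inter_subset_left (by omega)
        rw [← this]; exact inter_subset_right)
    interval_cases h : (p ∩ X).card
    · -- p ⊆ Y
      refine Or.inr (Or.inr ?_)
      have hpY : p ⊆ Y := by
        intro z hz
        have hzu : z ∈ X ∪ Y := by rw [hunion]; exact mem_univ z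
        rcases mem_union.mp hzu with hzX | hzY
        · exact absurd (mem_inter.mpr ⟨hz, hzX⟩) (by rw [Finset.card_eq_zero] at h; simp [h])
        · exact hzY
      exact insert_subset hv hpY
    · refine Or.inr (Or.inl ⟨?_, ?_⟩)
      · rw [Finset.insert_inter_of_notMem hvX]; exact h
      · rw [Finset.insert_inter_of_mem hv, card_insert_of_notMem (fun hc => hvp (mem_inter.mp hc).1)]
        omega
    · exact absurd rfl hne2
  have hfX : P.filter (fun p => p ⊆ X) = X.powersetCard 2 := by
    ext p
    rw [mem_filter, hP, mem_powersetCard, mem_powersetCard]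
    constructor
    · rintro ⟨⟨_, h2⟩, hX⟩; exact ⟨hX, h2⟩
    · rintro ⟨hX, h2⟩
      exact ⟨⟨fun z hz => mem_erase.mpr ⟨fun h => hvX (h ▸ hX hz), mem_univ z⟩, h2⟩, hX⟩
  have hsplit : (P.filter (fun p => p ⊆ X)).card + (P.filter (fun p => ¬ p ⊆ X)).card = P.card :=
    Finset.card_filter_add_card_filter_not (s := P) (p := fun p => p ⊆ X)
  have h1 : (P.filter (fun p => ¬ p ⊆ X)).card ≤
      (((surfEdges X Y).filter (fun e => v ∈ e)).card) :=
    le_trans (card_le_card key) (deg_ge_pairs X Y v)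
  have h2 : P.card = (Finset.univ.erase v : Finset V).card.choose 2 := card_powersetCard _ _
  rw [hfX, card_powersetCard] at hsplit
  omega

end DegLB

lemma arithX (N A gr ε : ℝ) (hg0 : 0 ≤ gr) (hN0 : 0 < N)
    (hA1 : 2*N/3 + 4*gr ≤ A) (hεN2 : (30 + 30*gr) * N ≤ ε * N^2) :
    5 / 9 * (N * (N - 1) / 2) - ε * N ^ 2 ≤
      (A - 1) * (A - 2) / 2 + (N - A) * (N - A - 1) / 2 := by
  have h2 : (0:ℝ) ≤ (A - 2*N/3 - 4*gr) * N := mul_nonneg (by linarith) (le_of_lt hN0)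
  have h3 : (0:ℝ) ≤ gr * N := mul_nonneg hg0 (le_of_lt hN0)
  have h4 := sq_nonneg (A - 2*N/3 - 1/2)
  nlinarith [hεN2, h2, h3, h4, hN0]

lemma arithY (N A gr ε : ℝ) (hg0 : 0 ≤ gr) (hN0 : 0 < N) (hNg : 12*gr + 12 ≤ N)
    (hA1 : 2*N/3 + 4*gr ≤ A) (hA2 : A < 2*N/3 + 1 + 4*gr)
    (hεN2 : (30 + 30*gr) * N ≤ ε * N^2) :
    5 / 9 * (N * (N - 1) / 2) - ε * N ^ 2 ≤
      (N - 1) * (N - 2) / 2 - A * (A - 1) / 2 := by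
  have hu1 : (0:ℝ) ≤ (2*N/3 + 1 + 4*gr - A) * (A - 1) :=
    mul_nonneg (by linarith) (by linarith)
  have hu2 : (0:ℝ) ≤ (2*N/3 + 1 + 4*gr) * (2*N/3 + 4*gr - (A - 1)) :=
    mul_nonneg (by linarith) (by linarith)
  have hU : A * (A - 1) ≤ (2*N/3 + 1 + 4*gr) * (2*N/3 + 4*gr) := by nlinarith
  have hgN : gr * gr ≤ gr * N := mul_le_mul_of_nonneg_left (by linarith) hg0
  have h3 : (0:ℝ) ≤ gr * N := mul_nonneg hg0 (le_of_lt hN0)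
  nlinarith [hεN2, hU, hgN, h3, hN0]

theorem part2 (g : ℕ) (ε : ℝ) (hε : 0 < ε) : ∃ n₀ : ℕ, ∀ n ≥ n₀, ∀ X Y : Finset (Fin n),
    Disjoint X Y → X ∪ Y = Finset.univ →
    X.card = ⌈(2 * (n : ℝ)) / 3⌉₊ + 4 * g →
    ∀ v : Fin n,
      (5 / 9) * (n.choose 2 : ℝ) - ε * (n : ℝ)^2 ≤
        (((surfEdges X Y).filter (fun e => v ∈ e)).card : ℝ) := by
  obtain ⟨m, hm⟩ := exists_nat_ge ((30 + 30 * (g : ℝ)) / ε)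
  refine ⟨m + 12 * g + 12, fun n hn X Y hdisj hunion hXcard v => ?_⟩
  have hn12 : 12 * g + 12 ≤ n := by omega
  have hnm : m ≤ n := by omega
  set N := (n : ℝ) with hNdef
  have hNg : 12 * (g : ℝ) + 12 ≤ N := by rw [hNdef]; exact_mod_cast hn12
  have hg0 : (0:ℝ) ≤ (g:ℝ) := by positivity
  have hN0 : (0:ℝ) < N := by linarith
  have hεN : 30 + 30 * (g:ℝ) ≤ ε * N := by
    have h1 : ((30 + 30 * (g : ℝ)) / ε) ≤ N := le_trans hm (by rw [hNdef]; exact_mod_cast hnm)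
    calc 30 + 30 * (g:ℝ) = ((30 + 30 * (g : ℝ)) / ε) * ε := by field_simp
      _ ≤ N * ε := mul_le_mul_of_nonneg_right h1 (le_of_lt hε)
      _ = ε * N := mul_comm _ _
  have hεN2 : (30 + 30 * (g:ℝ)) * N ≤ ε * N^2 := by
    calc (30 + 30 * (g:ℝ)) * N ≤ (ε * N) * N := mul_le_mul_of_nonneg_right hεN (le_of_lt hN0)
      _ = ε * N^2 := by ring
  -- cardinalities
  have hab : X.card + Y.card = n := by
    rw [← card_union_of_disjoint hdisj, hunion, card_univ, Fintype.card_fin]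
  set A := (X.card : ℝ) with hAdef
  set B := (Y.card : ℝ) with hBdef
  have hAB : A + B = N := by rw [hAdef, hBdef, hNdef]; exact_mod_cast hab
  have hceil1 : 0 < ⌈2 * N / 3⌉₊ := Nat.ceil_pos.mpr (by linarith)
  have hX1 : 1 ≤ X.card := by
    have hx := hXcard
    omega
  have hA1 : 2 * N / 3 + 4 * (g:ℝ) ≤ A := by
    have := Nat.le_ceil (2 * N / 3)
    have hc : A = (⌈(2 * (n : ℝ)) / 3⌉₊ : ℝ) + 4 * g := by
      rw [hAdef, hXcard]; push_cast; ring
    linarith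
  have hA2 : A < 2 * N / 3 + 1 + 4 * (g:ℝ) := by
    have := Nat.ceil_lt_add_one (by linarith : (0:ℝ) ≤ 2 * N / 3)
    have hc : A = (⌈(2 * (n : ℝ)) / 3⌉₊ : ℝ) + 4 * g := by
      rw [hAdef, hXcard]; push_cast; ring
    linarith
  have hchoose : ((n.choose 2 : ℕ) : ℝ) = N * (N - 1) / 2 := Nat.cast_choose_two ℝ n
  have hA8 : (8:ℝ) ≤ A := by linarith
  by_cases hv : v ∈ X
  · -- v in X
    have hdeg := degX X Y v hdisj hv
    have herase : (X.erase v).card = X.card - 1 := card_erase_of_mem hv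
    have hcast : (((X.erase v).card.choose 2 + Y.card.choose 2 : ℕ) : ℝ)
        = (A - 1) * (A - 2) / 2 + B * (B - 1) / 2 := by
      rw [Nat.cast_add, Nat.cast_choose_two ℝ, Nat.cast_choose_two ℝ, herase,
        Nat.cast_sub hX1]
      push_cast
      ring
    have hdeg' : (A - 1) * (A - 2) / 2 + B * (B - 1) / 2 ≤
        (((surfEdges X Y).filter (fun e => v ∈ e)).card : ℝ) := by
      rw [← hcast]; exact_mod_cast hdeg
    rw [hchoose]
    have hB : B = N - A := by linarith
    rw [hB] at hdeg'
    have h := arithX N A (g:ℝ) ε hg0 hN0 hA1 hεN2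
    linarith only [h, hdeg']
  · -- v in Y
    have hvY : v ∈ Y := by
      have : v ∈ X ∪ Y := by rw [hunion]; exact mem_univ v
      rcases mem_union.mp this with h | h
      · exact absurd h hv
      · exact h
    have hdeg := degY X Y v hdisj hunion hvY
    have herase : (Finset.univ.erase v : Finset (Fin n)).card = n - 1 := by
      rw [card_erase_of_mem (mem_univ v), card_univ, Fintype.card_fin]
    have hn1 : 1 ≤ n := by omega
    have hcast1 : (((Finset.univ.erase v : Finset (Fin n)).card.choose 2 : ℕ) : ℝ)
        = (N - 1) * (N - 2) / 2 := by
      rw [Nat.cast_choose_two ℝ, herase, Nat.cast_sub hn1]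
      push_cast
      ring
    have hcast2 : ((X.card.choose 2 : ℕ) : ℝ) = A * (A - 1) / 2 := Nat.cast_choose_two ℝ _
    have hdeg' : (N - 1) * (N - 2) / 2 ≤ A * (A - 1) / 2 +
        (((surfEdges X Y).filter (fun e => v ∈ e)).card : ℝ) := by
      rw [← hcast1, ← hcast2]; exact_mod_cast hdeg
    rw [hchoose]
    have h := arithY N A (g:ℝ) ε hg0 hN0 hNg hA1 hA2 hεN2
    linarith only [h, hdeg']

theorem stmt_14 (g : ℕ) :
    (∀ (V : Type) [Fintype V] [DecidableEq V] (X Y : Finset V),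
      Disjoint X Y → X ∪ Y = Finset.univ → X.Nonempty → Y.Nonempty →
      2 * (Y.card : ℤ) - 4 + 4 * (g : ℤ) < (X.card : ℤ) →
      ∀ H ⊆ surfEdges X Y, IsSurfaceTriangulation g H →
        ¬ (∀ v : V, ∃ t ∈ H, v ∈ t)) ∧
    (∀ ε : ℝ, 0 < ε → ∃ n₀ : ℕ, ∀ n ≥ n₀, ∀ X Y : Finset (Fin n),
      Disjoint X Y → X ∪ Y = Finset.univ →
      X.card = ⌈(2 * (n : ℝ)) / 3⌉₊ + 4 * g →
      ∀ v : Fin n,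
        (5 / 9) * (n.choose 2 : ℝ) - ε * (n : ℝ)^2 ≤
          (((surfEdges X Y).filter (fun e => v ∈ e)).card : ℝ)) := by
  refine ⟨fun V _ _ X Y hdisj hunion hXne hYne hlt H hHsub hTri =>
    part1 g V X Y hdisj hunion hXne hYne hlt H hHsub hTri, part2 g⟩
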